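/- Let σ be a permutation of [N], let ℓ, m ∈ ℤ^N, and let a, b be integers with a + b = N - 1. Then ∇(∏_{i=1}^N h_{ℓ_i - m_{σ(i)}}) = ∑_{k=1}^N (ℓ_k + a) ∏_{i=1}^N h_{(ℓ - e_k)_i - m_{σ(i)}} + ∑_{k=1}^N (b - m_k) ∏_{i=1}^N h_{ℓ_i - (m + e_k)_{σ(i)}}. -/

import Mathlib

open MvPolynomial

/-- The complete homogeneous symmetric polynomial `h_n` in `N` variables,
with `h_n = 0` for `n < 0`. -/
noncomputable def hh (N : ℕ) (n : ℤ) : MvPolynomial (Fin N) ℤ :=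
  if 0 ≤ n then ∑ d ∈ Finset.Nat.antidiagonalTuple N n.toNat, ∏ i, X i ^ d i else 0

/-- The diagonal derivative `∇ = ∂/∂x_1 + ⋯ + ∂/∂x_N`. -/
noncomputable def nabla (N : ℕ) (f : MvPolynomial (Fin N) ℤ) : MvPolynomial (Fin N) ℤ :=
  ∑ i, pderiv i f

/-- `a ∈ P_N`: weakly decreasing tuples of nonnegative integers. -/
def IsPar {N : ℕ} (a : Fin N → ℤ) : Prop :=
  (∀ i j : Fin N, i ≤ j → a j ≤ a i) ∧ ∀ i, 0 ≤ a i

/-- The skew Schur polynomial, defined by the Jacobi–Trudi formula. -/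
noncomputable def skewSchur (N : ℕ) (lam mu : Fin N → ℤ) : MvPolynomial (Fin N) ℤ :=
  Matrix.det (Matrix.of fun i j : Fin N => hh N (lam i - mu j - (i : ℤ) + (j : ℤ)))

/-- The tuple `e_k` with `1` in position `k` and `0` elsewhere. -/
def ee {N : ℕ} (k : Fin N) : Fin N → ℤ := fun i => if i = k then 1 else 0

lemma mon_eq {N : ℕ} (d : Fin N → ℕ) :
    (∏ i, X i ^ d i : MvPolynomial (Fin N) ℤ) =
      monomial (Finsupp.equivFunOnFinite.symm d) 1 := by
  rw [← prod_X_pow_eq_monomial]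
  symm
  apply Finset.prod_subset (Finset.subset_univ _)
  intro x _ hx
  rw [Finsupp.notMem_support_iff] at hx
  simp only [Finsupp.coe_equivFunOnFinite_symm] at hx ⊢
  simp [hx]

lemma symm_add {N : ℕ} (c : Fin N → ℕ) (j : Fin N) :
    Finsupp.equivFunOnFinite.symm (c + Pi.single j 1) =
      Finsupp.equivFunOnFinite.symm c + Finsupp.single j 1 := by
  ext i
  simp [Pi.single_apply, Finsupp.single_apply, eq_comm]

lemma claim_j {N : ℕ} (t : ℕ) (ht : 1 ≤ t) (j : Fin N) :
    ∑ d ∈ Finset.Nat.antidiagonalTuple N t, pderiv j (∏ i, X i ^ d i : MvPolynomial (Fin N) ℤ)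
      = ∑ c ∈ Finset.Nat.antidiagonalTuple N (t - 1),
          C ((c j : ℤ) + 1) * ∏ i, X i ^ c i := by
  classical
  rw [← Finset.sum_filter_of_ne
    (p := fun d : Fin N → ℕ => d j ≠ 0)
    (fun d _ hd => by
      intro h0
      apply hd
      rw [mon_eq, pderiv_monomial]
      simp only [Finsupp.coe_equivFunOnFinite_symm, h0]
      simp)]
  symm
  apply Finset.sum_nbij' (i := fun (c : Fin N → ℕ) k => c k + (if k = j then 1 else 0))
    (j := fun (d : Fin N → ℕ) k => d k - (if k = j then 1 else 0))
  · intro c hc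
    rw [Finset.Nat.mem_antidiagonalTuple] at hc
    rw [Finset.mem_filter, Finset.Nat.mem_antidiagonalTuple]
    constructor
    · rw [Finset.sum_add_distrib, hc, Finset.sum_ite_eq' Finset.univ j (fun _ => 1)]
      simp [Nat.sub_add_cancel ht]
    · simp
  · intro d hd
    rw [Finset.mem_filter, Finset.Nat.mem_antidiagonalTuple] at hd
    rw [Finset.Nat.mem_antidiagonalTuple]
    have h1 : 1 ≤ d j := Nat.one_le_iff_ne_zero.mpr hd.2
    have key : ∑ i, (d i - if i = j then 1 else 0) = (∑ i, d i) - 1 := by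
      rw [Finset.sum_tsub_distrib _ (fun i _ => by
        by_cases h : i = j
        · subst h; simpa using h1
        · simp [h])]
      congr 1
      rw [Finset.sum_ite_eq' Finset.univ j (fun _ => 1)]
      simp
    rw [key, hd.1]
  · intro c hc
    funext i
    by_cases h : i = j <;> simp [h]
  · intro d hd
    rw [Finset.mem_filter] at hd
    have h1 : 1 ≤ d j := Nat.one_le_iff_ne_zero.mpr hd.2
    funext i
    by_cases h : i = j
    · subst h; simp [Nat.sub_add_cancel h1]
    · simp [h]
  · intro c hc
    have hfun : (fun k => c k + if k = j then 1 else 0) = c + Pi.single j 1 := by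
      funext k
      by_cases h : k = j <;> simp [h, Pi.single_apply]
    rw [mon_eq, hfun, mon_eq, pderiv_monomial, symm_add, add_tsub_cancel_right,
        C_mul_monomial]
    congr 1
    push_cast [Finsupp.add_apply, Finsupp.single_eq_same,
      Finsupp.coe_equivFunOnFinite_symm]
    ring

lemma nabla_hh (N : ℕ) (n : ℤ) :
    nabla N (hh N n) = C (n + N - 1) * hh N (n - 1) := by
  classical
  rcases lt_trichotomy n 0 with h | h | h
  · rw [hh, if_neg (by omega), hh, if_neg (by omega)]
    simp [nabla]
  · subst h
    rw [hh, if_pos le_rfl, hh, if_neg (by norm_num)]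
    simp only [Int.toNat_zero, Finset.Nat.antidiagonalTuple_zero_right]
    simp [nabla]
  · have h1 : (1 : ℤ) ≤ n := h
    set t := n.toNat with htdef
    have ht : 1 ≤ t := by omega
    have hn1 : (n - 1).toNat = t - 1 := by omega
    rw [hh, if_pos (by omega), hh, if_pos (by omega), hn1, nabla]
    have : ∀ j : Fin N,
        pderiv j (∑ d ∈ Finset.Nat.antidiagonalTuple N t, ∏ i, X i ^ d i : MvPolynomial (Fin N) ℤ)
        = ∑ c ∈ Finset.Nat.antidiagonalTuple N (t - 1), C ((c j : ℤ) + 1) * ∏ i, X i ^ c i := by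
      intro j
      rw [map_sum]
      exact claim_j t ht j
    rw [Finset.sum_congr rfl (fun j _ => this j), Finset.sum_comm, Finset.mul_sum]
    apply Finset.sum_congr rfl
    intro c hc
    rw [Finset.Nat.mem_antidiagonalTuple] at hc
    rw [← Finset.sum_mul, ← map_sum C]
    congr 2
    have : ∑ j : Fin N, ((c j : ℤ) + 1) = (∑ j, (c j : ℤ)) + N := by
      rw [Finset.sum_add_distrib]; simp
    rw [this]
    have hcz : (∑ j, (c j : ℤ)) = (t : ℤ) - 1 := by
      have h2 := congrArg (Nat.cast : ℕ → ℤ) hc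
      push_cast [Nat.cast_sub ht] at h2
      exact h2
    have htn : (t : ℤ) = n := Int.toNat_of_nonneg (by omega)
    rw [hcz, htn]
    ring

lemma pderiv_finset_prod {N : ℕ} (j : Fin N) (s : Finset (Fin N))
    (f : Fin N → MvPolynomial (Fin N) ℤ) :
    pderiv j (∏ i ∈ s, f i) = ∑ k ∈ s, pderiv j (f k) * ∏ i ∈ s.erase k, f i := by
  classical
  induction s using Finset.induction_on with
  | empty => simp
  | insert a s h ih =>
    rw [Finset.prod_insert h, Derivation.leibniz, Finset.sum_insert h,
        Finset.erase_insert h, ih, smul_eq_mul, smul_eq_mul]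
    have hsum : ∑ k ∈ s, pderiv j (f k) * ∏ i ∈ (insert a s).erase k, f i
        = ∑ k ∈ s, f a * (pderiv j (f k) * ∏ i ∈ s.erase k, f i) := by
      apply Finset.sum_congr rfl
      intro k hk
      rw [Finset.erase_insert_of_ne (ne_of_mem_of_not_mem hk h).symm,
          Finset.prod_insert (fun hm => h (Finset.mem_of_mem_erase hm))]
      ring
    rw [hsum, Finset.mul_sum]
    ring

lemma nabla_prod_gen {N : ℕ} (f : Fin N → MvPolynomial (Fin N) ℤ) :
    nabla N (∏ i, f i) = ∑ k, nabla N (f k) * ∏ i ∈ Finset.univ.erase k, f i := by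
  unfold nabla
  rw [Finset.sum_congr rfl (fun j _ => pderiv_finset_prod j Finset.univ f), Finset.sum_comm]
  apply Finset.sum_congr rfl
  intro k _
  rw [Finset.sum_mul]

theorem nabla_prod (N : ℕ) (σ : Equiv.Perm (Fin N)) (l m : Fin N → ℤ)
    (a b : ℤ) (hab : a + b = (N : ℤ) - 1) :
    nabla N (∏ i, hh N (l i - m (σ i))) =
      (∑ k, C (l k + a) * ∏ i, hh N ((l - ee k) i - m (σ i)))
      + ∑ k, C (b - m k) * ∏ i, hh N (l i - (m + ee k) (σ i)) := by

  classical
  rw [nabla_prod_gen]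
  have hL : ∀ k : Fin N, (∏ i, hh N ((l - ee k) i - m (σ i)))
      = hh N (l k - m (σ k) - 1) * ∏ i ∈ Finset.univ.erase k, hh N (l i - m (σ i)) := by
    intro k
    rw [← Finset.mul_prod_erase Finset.univ _ (Finset.mem_univ k)]
    congr 1
    · congr 1
      simp only [Pi.sub_apply, ee, eq_self_iff_true, if_true]
      ring
    · apply Finset.prod_congr rfl
      intro i hi
      congr 1
      simp only [Pi.sub_apply, ee, if_neg (Finset.mem_erase.mp hi).1]
      ring
  have hR : ∀ k : Fin N, (∏ i, hh N (l i - (m + ee (σ k)) (σ i)))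
      = hh N (l k - m (σ k) - 1) * ∏ i ∈ Finset.univ.erase k, hh N (l i - m (σ i)) := by
    intro k
    rw [← Finset.mul_prod_erase Finset.univ _ (Finset.mem_univ k)]
    congr 1
    · congr 1
      simp only [Pi.add_apply, ee, eq_self_iff_true, if_true]
      ring
    · apply Finset.prod_congr rfl
      intro i hi
      congr 1
      have : σ i ≠ σ k := fun he => (Finset.mem_erase.mp hi).1 (σ.injective he)
      simp only [Pi.add_apply, ee, if_neg this]
      ring
  have hre : ∑ k, C (b - m k) * ∏ i, hh N (l i - (m + ee k) (σ i))
      = ∑ k, C (b - m (σ k)) * ∏ i, hh N (l i - (m + ee (σ k)) (σ i)) :=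
    (Equiv.sum_comp σ (fun k => C (b - m k) * ∏ i, hh N (l i - (m + ee k) (σ i)))).symm
  rw [hre]
  simp only [hL, hR, nabla_hh]
  rw [← Finset.sum_add_distrib]
  apply Finset.sum_congr rfl
  intro k _
  have : l k - m (σ k) + (N : ℤ) - 1 = (l k + a) + (b - m (σ k)) := by omega
  rw [this, C_add]
  ring
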